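/- Let γ be the Gauss measure on ℝⁿ, a > 0, β ∈ (0,1), p ∈ (1, 1/β). There is a constant C such that for all f ∈ L^p(γ) and all x ∈ ℝⁿ, I_a^β(|f|)(x) ≤ C ‖f‖_{L^p(γ)}^{βp} (𝓜_a f(x))^{1 - βp}, where 𝓜_a is the noncentered local Hardy–Littlewood maximal operator relative to γ. -/

import Mathlib

open MeasureTheory Metric Real ENNReal

/-- `m(x) = min{1, 1/|x|}`. -/
noncomputable def mfun {n : ℕ} (x : EuclideanSpace ℝ (Fin n)) : ℝ := min 1 ‖x‖⁻¹

/-- The Gauss measure `dγ(x) = π^{-n/2} e^{-|x|²} dx` on `ℝⁿ`. -/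
noncomputable def gauss (n : ℕ) : Measure (EuclideanSpace ℝ (Fin n)) :=
  volume.withDensity fun x => ENNReal.ofReal (Real.pi ^ (-(n : ℝ) / 2) * Real.exp (-‖x‖ ^ 2))

/-- The local fractional integral of `|f|`:
`I_a^β(|f|)(x) = ∫_{B(x, a m(x))} |f(y)| / V(x,y)^{1-β} dγ(y)`, with
`V(x,y) = γ(B(x,|x-y|))`. -/
noncomputable def fracInt (n : ℕ) (a β : ℝ) (f : EuclideanSpace ℝ (Fin n) → ℝ)
    (x : EuclideanSpace ℝ (Fin n)) : ℝ≥0∞ :=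
  ∫⁻ y in ball x (a * mfun x),
    ‖f y‖₊ * gauss n (ball x (dist x y)) ^ (β - 1) ∂gauss n

/-- The noncentered local Hardy–Littlewood maximal operator
`𝓜_a f(x) = sup_{B ∈ 𝓑_a(x)} γ(B)⁻¹ ∫_B |f| dγ`. -/
noncomputable def maxloc (n : ℕ) (a : ℝ) (f : EuclideanSpace ℝ (Fin n) → ℝ)
    (x : EuclideanSpace ℝ (Fin n)) : ℝ≥0∞ :=
  ⨆ (c : EuclideanSpace ℝ (Fin n)) (r : ℝ) (_ : 0 < r) (_ : r ≤ a * mfun c)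
    (_ : x ∈ ball c r),
      (gauss n (ball c r))⁻¹ * ∫⁻ y in ball c r, ‖f y‖₊ ∂gauss n

lemma gauss_ac {n : ℕ} : gauss n ≪ (volume : Measure (EuclideanSpace ℝ (Fin n))) :=
  withDensity_absolutelyContinuous _ _

lemma gauss_ball_lt_top {n : ℕ} (c : EuclideanSpace ℝ (Fin n)) (r : ℝ) :
    gauss n (ball c r) < ∞ := by
  rw [gauss, withDensity_apply _ measurableSet_ball]
  calc ∫⁻ x in ball c r, ENNReal.ofReal (Real.pi ^ (-(n : ℝ) / 2) * Real.exp (-‖x‖ ^ 2)) ∂volume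
      ≤ ∫⁻ _ in ball c r, ENNReal.ofReal (Real.pi ^ (-(n : ℝ) / 2)) ∂volume := by
        apply lintegral_mono
        intro x
        apply ENNReal.ofReal_le_ofReal
        have h1 : Real.exp (-‖x‖ ^ 2) ≤ 1 := Real.exp_le_one_iff.mpr (neg_nonpos.mpr (by positivity))
        nlinarith [Real.rpow_natCast Real.pi 0, Real.rpow_pos_of_pos Real.pi_pos (-(n:ℝ)/2), Real.rpow_pos_of_pos Real.pi_pos (-(n:ℝ)/2) ]
    _ = ENNReal.ofReal (Real.pi ^ (-(n : ℝ) / 2)) * volume (ball c r) := by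
        rw [setLIntegral_const]
    _ < ∞ := ENNReal.mul_lt_top ENNReal.ofReal_lt_top measure_ball_lt_top

lemma gauss_null {n : ℕ} {S : Set (EuclideanSpace ℝ (Fin n))} (h : volume S = 0) :
    gauss n S = 0 := gauss_ac h

lemma euclid_nontrivial {n : ℕ} (hn : n ≠ 0) : Nontrivial (EuclideanSpace ℝ (Fin n)) := by
  have : 0 < Module.finrank ℝ (EuclideanSpace ℝ (Fin n)) := by
    rw [finrank_euclideanSpace_fin]; omega
  exact Module.nontrivial_of_finrank_pos this

lemma gauss_sphere {n : ℕ} (hn : n ≠ 0) (c : EuclideanSpace ℝ (Fin n)) (r : ℝ) :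
    gauss n (sphere c r) = 0 := by
  haveI := euclid_nontrivial hn
  exact gauss_null (Measure.addHaar_sphere _ c r)

lemma gauss_ball_pos {n : ℕ} (hn : n ≠ 0) (c : EuclideanSpace ℝ (Fin n)) {r : ℝ}
    (hr : 0 < r) : 0 < gauss n (ball c r) := by
  haveI := euclid_nontrivial hn
  rw [gauss, withDensity_apply _ measurableSet_ball]
  have hvol : 0 < volume (ball c r) := measure_ball_pos _ _ hr
  set ε := Real.pi ^ (-(n : ℝ) / 2) * Real.exp (-(‖c‖ + r) ^ 2) with hε
  have hεpos : 0 < ε := by positivity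
  calc (0 : ℝ≥0∞) < ENNReal.ofReal ε * volume (ball c r) := by
        refine ENNReal.mul_pos ?_ hvol.ne'
        simpa using (ENNReal.ofReal_pos.mpr hεpos).ne'
    _ = ∫⁻ _ in ball c r, ENNReal.ofReal ε ∂volume := by rw [setLIntegral_const]
    _ ≤ _ := by
        apply setLIntegral_mono' measurableSet_ball
        intro x hx
        apply ENNReal.ofReal_le_ofReal
        have hx' : ‖x‖ ≤ ‖c‖ + r := by
          have := mem_ball.mp hx
          have h2 : ‖x - c‖ < r := by rwa [← dist_eq_norm]
          have := norm_sub_norm_le x c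
          linarith
        have : ‖x‖ ^ 2 ≤ (‖c‖ + r) ^ 2 := by nlinarith [norm_nonneg x, norm_nonneg c]
        have h3 := Real.exp_le_exp.mpr (neg_le_neg this)
        have hπ : (0:ℝ) < Real.pi ^ (-(n : ℝ) / 2) := Real.rpow_pos_of_pos Real.pi_pos _
        rw [hε]
        exact mul_le_mul_of_nonneg_left h3 hπ.le

lemma measurable_V {n : ℕ} (x : EuclideanSpace ℝ (Fin n)) :
    Measurable (fun y => gauss n (ball x (dist x y))) := by
  have h1 : Monotone (fun r : ℝ => gauss n (ball x r)) := fun r s hrs =>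
    measure_mono (ball_subset_ball hrs)
  exact h1.measurable.comp (Measurable.dist measurable_const measurable_id)

lemma exists_radius {n : ℕ} (hn : n ≠ 0) (x : EuclideanSpace ℝ (Fin n)) {R : ℝ}
    (hR : 0 < R) (s : ℝ≥0∞) :
    ∃ r : ℝ, 0 ≤ r ∧ r ≤ R ∧
      (∀ y, dist x y < R → gauss n (ball x (dist x y)) ≤ s → y ∈ closedBall x r) ∧
      gauss n (closedBall x r) ≤ s := by
  set T : Set ℝ := {r | r ∈ Set.Icc 0 R ∧ gauss n (ball x r) ≤ s} with hT
  have h0T : (0 : ℝ) ∈ T := by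
    constructor
    · exact ⟨le_refl 0, hR.le⟩
    · simp [ball_eq_empty.mpr (le_refl (0:ℝ))]
  have hTne : T.Nonempty := ⟨0, h0T⟩
  have hTbdd : BddAbove T := ⟨R, fun r hr => hr.1.2⟩
  set r₀ := sSup T with hr₀
  have hr₀0 : 0 ≤ r₀ := le_csSup hTbdd h0T
  have hr₀R : r₀ ≤ R := csSup_le hTne fun r hr => hr.1.2
  have hball : gauss n (ball x r₀) ≤ s := by
    rcases eq_or_lt_of_le hr₀0 with h | h
    · simp [ball_eq_empty.mpr h.ge]
    · -- ball x r₀ = ⋃ k, ball x (r₀ - r₀/(k+1))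
      have hu : ball x r₀ = ⋃ k : ℕ, ball x (r₀ - r₀ / (k + 1)) := by
        ext z
        simp only [mem_ball, Set.mem_iUnion]
        constructor
        · intro hz
          obtain ⟨k, hk⟩ := exists_nat_gt (r₀ / (r₀ - dist z x))
          refine ⟨k, ?_⟩
          have hpos : 0 < r₀ - dist z x := by linarith
          have hk1 : r₀ / (r₀ - dist z x) < k + 1 := by linarith
          have : r₀ / (k + 1) < r₀ - dist z x := by
            rw [div_lt_iff₀ (by positivity)]
            have he : r₀ = (r₀ / (r₀ - dist z x)) * (r₀ - dist z x) := by field_simp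
            nlinarith
          linarith
        · rintro ⟨k, hk⟩
          have : r₀ / (k + 1) > 0 := by positivity
          linarith
      rw [hu]
      have hmono : Monotone (fun k : ℕ => ball x (r₀ - r₀ / (k + 1))) := by
        intro i j hij
        apply ball_subset_ball
        have hij' : (i:ℝ) + 1 ≤ (j:ℝ) + 1 := by exact_mod_cast by omega
        have : r₀ / ((j:ℝ) + 1) ≤ r₀ / ((i:ℝ) + 1) := by
          apply div_le_div_of_nonneg_left h.le (by positivity) hij'
        linarith
      rw [hmono.directed_le.measure_iUnion]
      apply iSup_le
      intro k
      have hlt : r₀ - r₀ / (k + 1) < r₀ := by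
        have : r₀ / (k + 1) > 0 := by positivity
        linarith
      obtain ⟨r', hr'T, hr'⟩ := exists_lt_of_lt_csSup hTne hlt
      exact le_trans (measure_mono (ball_subset_ball hr'.le)) hr'T.2
  refine ⟨r₀, hr₀0, hr₀R, ?_, ?_⟩
  · intro y hy hVy
    have : dist x y ∈ T := ⟨⟨dist_nonneg, hy.le⟩, hVy⟩
    have := le_csSup hTbdd this
    simpa [mem_closedBall, dist_comm] using this
  · have h1 : closedBall x r₀ ⊆ ball x r₀ ∪ sphere x r₀ := by
      rw [ball_union_sphere]
    refine le_trans (measure_mono h1) (le_trans (measure_union_le _ _) ?_)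
    rw [gauss_sphere hn, add_zero]
    exact hball

lemma le_maxloc {n : ℕ} (hn : n ≠ 0) {a : ℝ} (f : EuclideanSpace ℝ (Fin n) → ℝ)
    (x c : EuclideanSpace ℝ (Fin n)) {r : ℝ} (hr : 0 < r) (hra : r ≤ a * mfun c)
    (hx : x ∈ ball c r) :
    ∫⁻ y in ball c r, ‖f y‖₊ ∂gauss n ≤ maxloc n a f x * gauss n (ball c r) := by
  have hpos := gauss_ball_pos hn c hr
  have hfin := gauss_ball_lt_top c r
  have hle : (gauss n (ball c r))⁻¹ * ∫⁻ y in ball c r, ‖f y‖₊ ∂gauss n ≤ maxloc n a f x := by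
    apply le_iSup_of_le c
    apply le_iSup_of_le r
    apply le_iSup_of_le hr
    apply le_iSup_of_le hra
    exact le_iSup_of_le hx le_rfl
  calc ∫⁻ y in ball c r, ‖f y‖₊ ∂gauss n
      = gauss n (ball c r) * ((gauss n (ball c r))⁻¹ * ∫⁻ y in ball c r, ‖f y‖₊ ∂gauss n) := by
        rw [← mul_assoc, ENNReal.mul_inv_cancel hpos.ne' hfin.ne, one_mul]
    _ ≤ gauss n (ball c r) * maxloc n a f x := by gcongr
    _ = maxloc n a f x * gauss n (ball c r) := mul_comm _ _

lemma forall_lt_aux {d r₀ ε : ℝ} (hε : 0 < ε) (h : ∀ k : ℕ, d < r₀ + ε / (k + 1)) :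
    d ≤ r₀ := by
  by_contra hc
  push_neg at hc
  obtain ⟨k, hk⟩ := exists_nat_gt (ε / (d - r₀))
  have hδ : 0 < d - r₀ := by linarith
  have h2 : ε / (k + 1) < d - r₀ := by
    rw [div_lt_iff₀ (by positivity)]
    have he : ε = (ε / (d - r₀)) * (d - r₀) := by field_simp
    nlinarith
  have := h k
  linarith

lemma setE_bounds {n : ℕ} (hn : n ≠ 0) {a : ℝ} (f : EuclideanSpace ℝ (Fin n) → ℝ)
    (x : EuclideanSpace ℝ (Fin n)) {R : ℝ} (hR : 0 < R) (hRa : R ≤ a * mfun x)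
    {s : ℝ≥0∞} (hs : 0 < s) :
    gauss n {y | dist x y < R ∧ gauss n (ball x (dist x y)) ≤ s} ≤ s ∧
    ∫⁻ y in {y | dist x y < R ∧ gauss n (ball x (dist x y)) ≤ s}, ‖f y‖₊ ∂gauss n ≤
      maxloc n a f x * s := by
  obtain ⟨r₀, h00, h0R, hmem, hcb⟩ := exists_radius hn x hR s
  set E := {y | dist x y < R ∧ gauss n (ball x (dist x y)) ≤ s} with hE
  have hEsub : E ⊆ closedBall x r₀ := fun y hy => hmem y hy.1 hy.2
  have hmeasE : gauss n E ≤ s := le_trans (measure_mono hEsub) hcb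
  refine ⟨hmeasE, ?_⟩
  set M := maxloc n a f x with hM
  rcases eq_or_ne M ∞ with hMtop | hMtop
  · rw [hMtop, ENNReal.top_mul hs.ne']
    exact le_top
  rcases eq_or_lt_of_le h0R with hr₀R | hr₀R
  · -- r₀ = R
    have hsub2 : E ⊆ ball x R := fun y hy => mem_ball'.mpr hy.1
    calc ∫⁻ y in E, ‖f y‖₊ ∂gauss n ≤ ∫⁻ y in ball x R, ‖f y‖₊ ∂gauss n :=
          lintegral_mono_set hsub2
      _ ≤ M * gauss n (ball x R) := le_maxloc hn f x x hR hRa (mem_ball_self hR)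
      _ ≤ M * s := by
          apply mul_le_mul_right
          refine le_trans (le_trans (measure_mono ball_subset_closedBall) ?_) hcb
          rw [hr₀R]
    -- done
  · -- r₀ < R
    set rk : ℕ → ℝ := fun k => r₀ + (R - r₀) / (k + 1) with hrk
    have hrkpos : ∀ k : ℕ, 0 < rk k := fun k => by
      have : (0:ℝ) < (R - r₀) / (k + 1) := by
        apply div_pos (by linarith) (by positivity)
      simp only [hrk]; linarith
    have hrkR : ∀ k : ℕ, rk k ≤ R := fun k => by
      have h1 : (R - r₀) / ((k:ℝ) + 1) ≤ (R - r₀) / 1 := by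
        apply div_le_div_of_nonneg_left (by linarith) one_pos
        have := Nat.cast_nonneg (α := ℝ) k
        linarith
      simp only [hrk]; linarith
    have hrkgt : ∀ k : ℕ, r₀ < rk k := fun k => by
      have : (0:ℝ) < (R - r₀) / (k + 1) := by
        apply div_pos (by linarith) (by positivity)
      simp only [hrk]; linarith
    have hstep : ∀ k : ℕ, ∫⁻ y in E, ‖f y‖₊ ∂gauss n ≤ M * gauss n (ball x (rk k)) := by
      intro k
      have hsub : E ⊆ ball x (rk k) := fun y hy =>
        mem_ball'.mpr (lt_of_le_of_lt (mem_closedBall'.mp (hEsub hy)) (hrkgt k))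
      exact le_trans (lintegral_mono_set hsub)
        (le_maxloc hn f x x (hrkpos k) (le_trans (hrkR k) hRa) (mem_ball_self (hrkpos k)))
    have hinter : (⋂ k : ℕ, ball x (rk k)) = closedBall x r₀ := by
      ext z
      simp only [Set.mem_iInter, mem_ball, mem_closedBall]
      constructor
      · intro h
        exact forall_lt_aux (by linarith : (0:ℝ) < R - r₀) fun k => h k
      · intro h k
        exact lt_of_le_of_lt h (hrkgt k)
    have hiInf : (⨅ k : ℕ, gauss n (ball x (rk k))) ≤ s := by
      rw [← Directed.measure_iInter
        (fun k => measurableSet_ball.nullMeasurableSet) ?_ ⟨0, (gauss_ball_lt_top x (rk 0)).ne⟩]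
      · rw [hinter]; exact hcb
      · intro i j
        have key : ∀ l m : ℕ, l ≤ m → rk m ≤ rk l := by
          intro l m hlm
          simp only [hrk]
          have h1 : ((l:ℝ)) + 1 ≤ (m:ℝ) + 1 := by
            have : (l:ℝ) ≤ (m:ℝ) := by exact_mod_cast hlm
            linarith
          have := div_le_div_of_nonneg_left (by linarith : (0:ℝ) ≤ R - r₀)
            (by positivity : (0:ℝ) < (l:ℝ) + 1) h1
          linarith
        exact ⟨max i j, ball_subset_ball (key i (max i j) (Nat.le_max_left i j)),
          ball_subset_ball (key j (max i j) (Nat.le_max_right i j))⟩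
    calc ∫⁻ y in E, ‖f y‖₊ ∂gauss n ≤ ⨅ k : ℕ, M * gauss n (ball x (rk k)) :=
          le_iInf hstep
      _ = M * ⨅ k : ℕ, gauss n (ball x (rk k)) := by
          rw [ENNReal.mul_iInf' (fun h => absurd h hMtop) (fun _ => ⟨0⟩)]
      _ ≤ M * s := mul_le_mul_right hiInf _

lemma holder_bound {n : ℕ} {p q : ℝ} (hpq : p.HolderConjugate q)
    (f : EuclideanSpace ℝ (Fin n) → ℝ)
    (hf : AEMeasurable (fun y => (‖f y‖₊ : ℝ≥0∞)) (gauss n)) (S : Set (EuclideanSpace ℝ (Fin n))) :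
    ∫⁻ y in S, ‖f y‖₊ ∂gauss n ≤
      eLpNorm f (ENNReal.ofReal p) (gauss n) * gauss n S ^ (1 / q) := by
  have hp0 : ENNReal.ofReal p ≠ 0 := by
    simp only [ne_eq, ENNReal.ofReal_eq_zero, not_le]; exact hpq.pos
  have hptop : ENNReal.ofReal p ≠ ∞ := ENNReal.ofReal_ne_top
  have htr : (ENNReal.ofReal p).toReal = p := ENNReal.toReal_ofReal hpq.nonneg
  have hmain := ENNReal.lintegral_mul_le_Lp_mul_Lq ((gauss n).restrict S) hpq hf.restrict
    (aemeasurable_const (b := (1:ℝ≥0∞)))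
  simp only [Pi.mul_apply, mul_one, ENNReal.one_rpow, lintegral_const, one_mul,
    Measure.restrict_apply MeasurableSet.univ, Set.univ_inter] at hmain
  refine le_trans hmain ?_
  apply mul_le_mul' ?_ le_rfl
  rw [eLpNorm_eq_lintegral_rpow_enorm_toReal hp0 hptop, htr]
  exact ENNReal.rpow_le_rpow (setLIntegral_le_lintegral _ _) hpq.one_div_nonneg

lemma two_rpow_nat (j : ℕ) : (2:ℝ≥0∞) ^ ((j:ℝ)) = (2:ℝ≥0∞) ^ (j:ℕ) :=
  ENNReal.rpow_natCast 2 j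

lemma claim_low {t u : ℝ≥0∞} (ht0 : t ≠ 0) (httop : t ≠ ∞) (hu0 : u ≠ 0) (hut : u ≤ t) :
    ∃ j : ℕ, t * (2:ℝ≥0∞) ^ (-((j:ℝ) + 1)) < u ∧ u ≤ t * (2:ℝ≥0∞) ^ (-(j:ℝ)) := by
  classical
  have hP : ∃ j : ℕ, t * (2:ℝ≥0∞) ^ (-((j:ℝ) + 1)) < u := by
    have hdiv : t / u ≠ ∞ := (ENNReal.div_lt_top httop hu0).ne
    obtain ⟨k, hk⟩ := ENNReal.exists_nat_gt hdiv
    refine ⟨k, ?_⟩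
    have h2k : (k : ℝ≥0∞) < (2:ℝ≥0∞) ^ ((k:ℝ) + 1) := by
      calc (k : ℝ≥0∞) < ((2 ^ k : ℕ) : ℝ≥0∞) := by
            exact_mod_cast Nat.lt_two_pow_self
        _ = (2:ℝ≥0∞) ^ (k:ℕ) := by push_cast; ring
        _ = (2:ℝ≥0∞) ^ ((k:ℝ)) := (two_rpow_nat k).symm
        _ < (2:ℝ≥0∞) ^ ((k:ℝ) + 1) := by
            exact ENNReal.rpow_lt_rpow_of_exponent_lt one_lt_two (by norm_num) (by linarith)
    have htu : t / u < (2:ℝ≥0∞) ^ ((k:ℝ) + 1) := lt_trans hk h2k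
    have h1 : t < (2:ℝ≥0∞) ^ ((k:ℝ) + 1) * u := by
      have heq : t / u * u = t :=
        ENNReal.div_mul_cancel hu0 ((lt_of_le_of_lt hut httop.lt_top).ne)
      calc t = t / u * u := heq.symm
        _ < (2:ℝ≥0∞) ^ ((k:ℝ) + 1) * u := by
            exact ENNReal.mul_lt_mul_left hu0 (lt_of_le_of_lt hut httop.lt_top).ne htu
    rw [ENNReal.rpow_neg, ← div_eq_mul_inv,
      ENNReal.div_lt_iff (Or.inl (ENNReal.rpow_pos (by norm_num) (by norm_num)).ne') (Or.inl (ENNReal.rpow_ne_top_of_nonneg (by positivity) (by norm_num)))]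
    rw [mul_comm] at h1
    exact h1
  set j := Nat.find hP with hj
  refine ⟨j, Nat.find_spec hP, ?_⟩
  rcases Nat.eq_zero_or_pos j with h0 | hpos
  · rw [h0]
    simpa using hut
  · have hnot := Nat.find_min hP (Nat.sub_lt hpos one_pos)
    push_neg at hnot
    have : ((j - 1 : ℕ) : ℝ) + 1 = (j : ℝ) := by
      have : 1 ≤ j := hpos
      push_cast [Nat.cast_sub this]
      ring
    rwa [this] at hnot

lemma claim_high {t u : ℝ≥0∞} (ht0 : t ≠ 0) (hutop : u ≠ ∞) (htu : t < u) :
    ∃ j : ℕ, t * (2:ℝ≥0∞) ^ ((j:ℝ)) < u ∧ u ≤ t * (2:ℝ≥0∞) ^ ((j:ℝ) + 1) := by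
  classical
  have httop : t ≠ ∞ := (htu.trans hutop.lt_top).ne
  have hP : ∃ j : ℕ, u ≤ t * (2:ℝ≥0∞) ^ ((j:ℝ) + 1) := by
    have hdiv : u / t ≠ ∞ := (ENNReal.div_lt_top hutop ht0).ne
    obtain ⟨k, hk⟩ := ENNReal.exists_nat_gt hdiv
    refine ⟨k, ?_⟩
    have h2k : (k : ℝ≥0∞) < (2:ℝ≥0∞) ^ ((k:ℝ) + 1) := by
      calc (k : ℝ≥0∞) < ((2 ^ k : ℕ) : ℝ≥0∞) := by
            exact_mod_cast Nat.lt_two_pow_self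
        _ = (2:ℝ≥0∞) ^ (k:ℕ) := by push_cast; ring
        _ = (2:ℝ≥0∞) ^ ((k:ℝ)) := (two_rpow_nat k).symm
        _ < (2:ℝ≥0∞) ^ ((k:ℝ) + 1) := by
            exact ENNReal.rpow_lt_rpow_of_exponent_lt one_lt_two (by norm_num) (by linarith)
    have heq : u / t * t = u := ENNReal.div_mul_cancel ht0 httop
    calc u = u / t * t := heq.symm
      _ ≤ (2:ℝ≥0∞) ^ ((k:ℝ) + 1) * t :=
          mul_le_mul_left (lt_trans hk h2k).le t
      _ = t * (2:ℝ≥0∞) ^ ((k:ℝ) + 1) := mul_comm _ _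
  set j := Nat.find hP with hj
  refine ⟨j, ?_, Nat.find_spec hP⟩
  rcases Nat.eq_zero_or_pos j with h0 | hpos
  · rw [h0]
    simpa using htu
  · have hnot := Nat.find_min hP (Nat.sub_lt hpos one_pos)
    push_neg at hnot
    have hcast : ((j - 1 : ℕ) : ℝ) + 1 = (j : ℝ) := by
      have : 1 ≤ j := hpos
      push_cast [Nat.cast_sub this]
      ring
    rwa [hcast] at hnot

lemma geo_sum {r : ℝ} (hr : r < 0) :
    (∑' j : ℕ, (2:ℝ≥0∞) ^ ((j:ℝ) * r)) = (1 - (2:ℝ≥0∞) ^ r)⁻¹ ∧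
    (1 - (2:ℝ≥0∞) ^ r)⁻¹ ≠ ∞ := by
  have h1 : ∀ j : ℕ, (2:ℝ≥0∞) ^ ((j:ℝ) * r) = ((2:ℝ≥0∞) ^ r) ^ (j:ℕ) := by
    intro j
    rw [mul_comm, ENNReal.rpow_mul, ENNReal.rpow_natCast]
  have hlt : (2:ℝ≥0∞) ^ r < 1 := by
    calc (2:ℝ≥0∞) ^ r < (2:ℝ≥0∞) ^ (0:ℝ) :=
          ENNReal.rpow_lt_rpow_of_exponent_lt one_lt_two (by norm_num) hr
      _ = 1 := ENNReal.rpow_zero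
  constructor
  · rw [tsum_congr h1]
    exact ENNReal.tsum_geometric _
  · simp only [ne_eq, ENNReal.inv_eq_top, tsub_eq_zero_iff_le, not_le]
    exact hlt

lemma two_rpow_ne_top {x : ℝ} : (2:ℝ≥0∞) ^ x ≠ ∞ := by
  simp [ENNReal.rpow_eq_top_iff]

lemma two_rpow_ne_zero {x : ℝ} : (2:ℝ≥0∞) ^ x ≠ 0 := by
  simp [ENNReal.rpow_eq_zero_iff]

lemma term_low_eq {t : ℝ≥0∞} (ht0 : t ≠ 0) (httop : t ≠ ∞) {β : ℝ} (j : ℕ) (M : ℝ≥0∞) :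
    (t * (2:ℝ≥0∞) ^ (-((j:ℝ)+1))) ^ (β-1) * (M * (t * (2:ℝ≥0∞) ^ (-(j:ℝ)))) =
      M * t ^ β * ((2:ℝ≥0∞) ^ ((1:ℝ)-β) * (2:ℝ≥0∞) ^ ((j:ℝ) * (-β))) := by
  rw [ENNReal.mul_rpow_of_ne_top httop two_rpow_ne_top, ← ENNReal.rpow_mul]
  calc t ^ (β-1) * (2:ℝ≥0∞) ^ (-((j:ℝ)+1) * (β-1)) * (M * (t * (2:ℝ≥0∞) ^ (-(j:ℝ))))
      = M * (t ^ (β-1) * t ^ (1:ℝ)) *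
          ((2:ℝ≥0∞) ^ (-((j:ℝ)+1) * (β-1)) * (2:ℝ≥0∞) ^ (-(j:ℝ))) := by
        rw [ENNReal.rpow_one]; ring
    _ = M * t ^ (β - 1 + 1) * (2:ℝ≥0∞) ^ (-((j:ℝ)+1) * (β-1) + -(j:ℝ)) := by
        rw [← ENNReal.rpow_add _ _ ht0 httop, ← ENNReal.rpow_add _ _ two_ne_zero ENNReal.ofNat_ne_top]
    _ = M * t ^ β * (2:ℝ≥0∞) ^ ((1:ℝ)-β + (j:ℝ) * (-β)) := by
        norm_num
        congr 2
        ring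
    _ = _ := by
        rw [ENNReal.rpow_add _ _ two_ne_zero ENNReal.ofNat_ne_top]

lemma term_high_eq {t : ℝ≥0∞} (ht0 : t ≠ 0) (httop : t ≠ ∞) {β q : ℝ} (j : ℕ) (N : ℝ≥0∞) :
    (t * (2:ℝ≥0∞) ^ ((j:ℝ))) ^ (β-1) * (N * (t * (2:ℝ≥0∞) ^ ((j:ℝ)+1)) ^ (1/q)) =
      N * t ^ (β - 1 + 1/q) *
        ((2:ℝ≥0∞) ^ ((1:ℝ)/q) * (2:ℝ≥0∞) ^ ((j:ℝ) * (β - 1 + 1/q))) := by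
  rw [ENNReal.mul_rpow_of_ne_top httop two_rpow_ne_top, ← ENNReal.rpow_mul,
    ENNReal.mul_rpow_of_ne_top httop two_rpow_ne_top, ← ENNReal.rpow_mul]
  calc t ^ (β-1) * (2:ℝ≥0∞) ^ ((j:ℝ) * (β-1)) * (N * (t ^ (1/q) * (2:ℝ≥0∞) ^ (((j:ℝ)+1) * (1/q))))
      = N * (t ^ (β-1) * t ^ (1/q)) *
          ((2:ℝ≥0∞) ^ ((j:ℝ) * (β-1)) * (2:ℝ≥0∞) ^ (((j:ℝ)+1) * (1/q))) := by ring
    _ = N * t ^ (β - 1 + 1/q) * (2:ℝ≥0∞) ^ ((j:ℝ) * (β-1) + ((j:ℝ)+1) * (1/q)) := by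
        rw [← ENNReal.rpow_add _ _ ht0 httop, ← ENNReal.rpow_add _ _ two_ne_zero ENNReal.ofNat_ne_top]
    _ = N * t ^ (β - 1 + 1/q) * (2:ℝ≥0∞) ^ ((1:ℝ)/q + (j:ℝ) * (β - 1 + 1/q)) := by
        congr 2
        ring
    _ = _ := by
        rw [ENNReal.rpow_add _ _ two_ne_zero ENNReal.ofNat_ne_top]

lemma rpow_ne_top' {x : ℝ≥0∞} {y : ℝ} (hx0 : x ≠ 0) (hxt : x ≠ ∞) : x ^ y ≠ ∞ := by
  simp [ENNReal.rpow_eq_top_iff, hx0, hxt]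

lemma rpow_anti {x y : ℝ≥0∞} {z : ℝ} (hxy : x ≤ y) (hz : z ≤ 0) : y ^ z ≤ x ^ z := by
  have h1 : y ^ z = (y ^ (-z))⁻¹ := by rw [← ENNReal.rpow_neg, neg_neg]
  have h2 : x ^ z = (x ^ (-z))⁻¹ := by rw [← ENNReal.rpow_neg, neg_neg]
  rw [h1, h2]
  exact ENNReal.inv_le_inv.mpr (ENNReal.rpow_le_rpow hxy (by linarith))

lemma key_bound {n : ℕ} (hn : n ≠ 0) {a β p q : ℝ} (hβ0 : 0 < β) (hβ1 : β < 1)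
    (hpq : p.HolderConjugate q) (hβp : β < 1/p)
    (f : EuclideanSpace ℝ (Fin n) → ℝ)
    (hf : AEMeasurable (fun y => (‖f y‖₊ : ℝ≥0∞)) (gauss n))
    (x : EuclideanSpace ℝ (Fin n)) (hR : 0 < a * mfun x)
    {t : ℝ≥0∞} (ht0 : t ≠ 0) (httop : t ≠ ∞) :
    fracInt n a β f x ≤
      ((2:ℝ≥0∞) ^ ((1:ℝ)-β) * (1 - (2:ℝ≥0∞) ^ (-β))⁻¹) * (maxloc n a f x * t ^ β) +
      ((2:ℝ≥0∞) ^ ((1:ℝ)/q) * (1 - (2:ℝ≥0∞) ^ (β - 1/p))⁻¹) *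
        (eLpNorm f (ENNReal.ofReal p) (gauss n) * t ^ (β - 1/p)) := by
  set R := a * mfun x with hRdef
  set V : EuclideanSpace ℝ (Fin n) → ℝ≥0∞ := fun y => gauss n (ball x (dist x y)) with hV
  set M := maxloc n a f x with hM
  set N := eLpNorm f (ENNReal.ofReal p) (gauss n) with hN
  set h : EuclideanSpace ℝ (Fin n) → ℝ≥0∞ := fun y => ‖f y‖₊ * V y ^ (β - 1) with hh
  have hVmeas : Measurable V := measurable_V x
  have hVfin : ∀ y, V y ≠ ∞ := fun y => (gauss_ball_lt_top x _).ne
  -- the dyadic pieces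
  set A : ℕ → Set (EuclideanSpace ℝ (Fin n)) := fun j =>
    {y | dist x y < R ∧ t * (2:ℝ≥0∞) ^ (-((j:ℝ)+1)) < V y ∧ V y ≤ t * (2:ℝ≥0∞) ^ (-(j:ℝ))}
    with hA
  set B : ℕ → Set (EuclideanSpace ℝ (Fin n)) := fun j =>
    {y | dist x y < R ∧ t * (2:ℝ≥0∞) ^ ((j:ℝ)) < V y ∧ V y ≤ t * (2:ℝ≥0∞) ^ ((j:ℝ)+1)}
    with hB
  have hdistmeas : Measurable (fun y : EuclideanSpace ℝ (Fin n) => dist x y) :=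
    Measurable.dist measurable_const measurable_id
  have hAmeas : ∀ j, MeasurableSet (A j) := by
    intro j
    have : A j = (fun y => dist x y) ⁻¹' (Set.Iio R) ∩
        V ⁻¹' (Set.Ioc (t * (2:ℝ≥0∞) ^ (-((j:ℝ)+1))) (t * (2:ℝ≥0∞) ^ (-(j:ℝ)))) := by
      ext y; simp [hA, Set.mem_Ioc, and_assoc]
    rw [this]
    exact (hdistmeas measurableSet_Iio).inter (hVmeas measurableSet_Ioc)
  have hBmeas : ∀ j, MeasurableSet (B j) := by
    intro j
    have : B j = (fun y => dist x y) ⁻¹' (Set.Iio R) ∩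
        V ⁻¹' (Set.Ioc (t * (2:ℝ≥0∞) ^ ((j:ℝ))) (t * (2:ℝ≥0∞) ^ ((j:ℝ)+1))) := by
      ext y; simp [hB, Set.mem_Ioc, and_assoc]
    rw [this]
    exact (hdistmeas measurableSet_Iio).inter (hVmeas measurableSet_Ioc)
  -- covering
  have hcover : ball x R ⊆ {x} ∪ ((⋃ j, A j) ∪ (⋃ j, B j)) := by
    intro y hy
    rcases eq_or_ne y x with rfl | hyx
    · exact Set.mem_union_left _ rfl
    have hdist : dist x y < R := by rw [dist_comm]; exact mem_ball.mp hy
    have hV0 : V y ≠ 0 := by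
      have : (0:ℝ) < dist x y := dist_pos.mpr (Ne.symm hyx)
      exact (gauss_ball_pos hn x this).ne'
    rcases le_or_gt (V y) t with hle | hlt
    · obtain ⟨j, hj1, hj2⟩ := claim_low ht0 httop hV0 hle
      exact Set.mem_union_right _ (Set.mem_union_left _
        (Set.mem_iUnion.mpr ⟨j, hdist, hj1, hj2⟩))
    · obtain ⟨j, hj1, hj2⟩ := claim_high ht0 (hVfin y) hlt
      exact Set.mem_union_right _ (Set.mem_union_right _
        (Set.mem_iUnion.mpr ⟨j, hdist, hj1, hj2⟩))
  -- split the integral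
  have hsplit : fracInt n a β f x ≤
      (∑' j, ∫⁻ y in A j, h y ∂gauss n) + ∑' j, ∫⁻ y in B j, h y ∂gauss n := by
    have h0 : fracInt n a β f x = ∫⁻ y in ball x R, h y ∂gauss n := rfl
    rw [h0]
    refine le_trans (lintegral_mono_set hcover) ?_
    refine le_trans (lintegral_union_le _ _ _) ?_
    have hxnull : gauss n {x} = 0 := by
      rw [← Metric.sphere_zero]
      exact gauss_sphere hn x 0
    rw [Measure.restrict_eq_zero.mpr hxnull, lintegral_zero_measure, zero_add]
    refine le_trans (lintegral_union_le _ _ _) ?_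
    exact add_le_add (lintegral_iUnion_le _ _) (lintegral_iUnion_le _ _)
  -- per-term bounds
  have hexp1 : (1:ℝ)/q = 1 - 1/p := by
    have := hpq.inv_add_inv_eq_one
    rw [one_div, one_div]
    linarith
  have hlow : (∑' j, ∫⁻ y in A j, h y ∂gauss n) ≤
      ((2:ℝ≥0∞) ^ ((1:ℝ)-β) * (1 - (2:ℝ≥0∞) ^ (-β))⁻¹) * (M * t ^ β) := by
    have hterm : ∀ j : ℕ, ∫⁻ y in A j, h y ∂gauss n ≤
        M * t ^ β * (2:ℝ≥0∞) ^ ((1:ℝ)-β) * (2:ℝ≥0∞) ^ ((j:ℝ) * (-β)) := by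
      intro j
      set c := (t * (2:ℝ≥0∞) ^ (-((j:ℝ)+1))) ^ (β-1) with hc
      have hcne : c ≠ ∞ :=
        rpow_ne_top' (mul_ne_zero ht0 two_rpow_ne_zero) (ENNReal.mul_ne_top httop two_rpow_ne_top)
      have hstep1 : ∫⁻ y in A j, h y ∂gauss n ≤ ∫⁻ y in A j, c * ‖f y‖₊ ∂gauss n := by
        apply lintegral_mono_ae
        refine (ae_restrict_iff' (hAmeas j)).mpr (ae_of_all _ ?_)
        intro y hy
        have hle : V y ^ (β-1) ≤ c := rpow_anti hy.2.1.le (by linarith)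
        calc h y = ‖f y‖₊ * V y ^ (β-1) := rfl
          _ ≤ ‖f y‖₊ * c := mul_le_mul_right hle _
          _ = c * ‖f y‖₊ := mul_comm _ _
      have hstep2 : ∫⁻ y in A j, c * ‖f y‖₊ ∂gauss n = c * ∫⁻ y in A j, ‖f y‖₊ ∂gauss n :=
        lintegral_const_mul' _ _ hcne
      have hsub : A j ⊆ {y | dist x y < R ∧ V y ≤ t * (2:ℝ≥0∞) ^ (-(j:ℝ))} :=
        fun y hy => ⟨hy.1, hy.2.2⟩
      have hs0 : (0:ℝ≥0∞) < t * (2:ℝ≥0∞) ^ (-(j:ℝ)) :=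
        ENNReal.mul_pos ht0 two_rpow_ne_zero
      have hstep3 : ∫⁻ y in A j, ‖f y‖₊ ∂gauss n ≤ M * (t * (2:ℝ≥0∞) ^ (-(j:ℝ))) :=
        le_trans (lintegral_mono_set hsub) (setE_bounds hn f x hR le_rfl hs0).2
      calc ∫⁻ y in A j, h y ∂gauss n
          ≤ c * (M * (t * (2:ℝ≥0∞) ^ (-(j:ℝ)))) := by
            refine le_trans hstep1 ?_
            rw [hstep2]
            exact mul_le_mul_right hstep3 c
        _ = M * t ^ β * ((2:ℝ≥0∞) ^ ((1:ℝ)-β) * (2:ℝ≥0∞) ^ ((j:ℝ) * (-β))) :=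
            term_low_eq ht0 httop j M
        _ = M * t ^ β * (2:ℝ≥0∞) ^ ((1:ℝ)-β) * (2:ℝ≥0∞) ^ ((j:ℝ) * (-β)) := by ring
    calc (∑' j, ∫⁻ y in A j, h y ∂gauss n)
        ≤ ∑' j : ℕ, M * t ^ β * (2:ℝ≥0∞) ^ ((1:ℝ)-β) * (2:ℝ≥0∞) ^ ((j:ℝ) * (-β)) :=
          ENNReal.tsum_le_tsum hterm
      _ = (M * t ^ β * (2:ℝ≥0∞) ^ ((1:ℝ)-β)) * ∑' j : ℕ, (2:ℝ≥0∞) ^ ((j:ℝ) * (-β)) :=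
          ENNReal.tsum_mul_left
      _ = (M * t ^ β * (2:ℝ≥0∞) ^ ((1:ℝ)-β)) * (1 - (2:ℝ≥0∞) ^ (-β))⁻¹ := by
          rw [(geo_sum (by linarith : -β < 0)).1]
      _ = ((2:ℝ≥0∞) ^ ((1:ℝ)-β) * (1 - (2:ℝ≥0∞) ^ (-β))⁻¹) * (M * t ^ β) := by ring
  have hhigh : (∑' j, ∫⁻ y in B j, h y ∂gauss n) ≤
      ((2:ℝ≥0∞) ^ ((1:ℝ)/q) * (1 - (2:ℝ≥0∞) ^ (β - 1/p))⁻¹) * (N * t ^ (β - 1/p)) := by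
    have hterm : ∀ j : ℕ, ∫⁻ y in B j, h y ∂gauss n ≤
        N * t ^ (β - 1/p) * (2:ℝ≥0∞) ^ ((1:ℝ)/q) * (2:ℝ≥0∞) ^ ((j:ℝ) * (β - 1/p)) := by
      intro j
      set c := (t * (2:ℝ≥0∞) ^ ((j:ℝ))) ^ (β-1) with hc
      have hcne : c ≠ ∞ :=
        rpow_ne_top' (mul_ne_zero ht0 two_rpow_ne_zero) (ENNReal.mul_ne_top httop two_rpow_ne_top)
      have hstep1 : ∫⁻ y in B j, h y ∂gauss n ≤ ∫⁻ y in B j, c * ‖f y‖₊ ∂gauss n := by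
        apply lintegral_mono_ae
        refine (ae_restrict_iff' (hBmeas j)).mpr (ae_of_all _ ?_)
        intro y hy
        have hle : V y ^ (β-1) ≤ c := rpow_anti hy.2.1.le (by linarith)
        calc h y = ‖f y‖₊ * V y ^ (β-1) := rfl
          _ ≤ ‖f y‖₊ * c := mul_le_mul_right hle _
          _ = c * ‖f y‖₊ := mul_comm _ _
      have hstep2 : ∫⁻ y in B j, c * ‖f y‖₊ ∂gauss n = c * ∫⁻ y in B j, ‖f y‖₊ ∂gauss n :=
        lintegral_const_mul' _ _ hcne
      have hsub : B j ⊆ {y | dist x y < R ∧ V y ≤ t * (2:ℝ≥0∞) ^ ((j:ℝ)+1)} :=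
        fun y hy => ⟨hy.1, hy.2.2⟩
      have hs0 : (0:ℝ≥0∞) < t * (2:ℝ≥0∞) ^ ((j:ℝ)+1) :=
        ENNReal.mul_pos ht0 two_rpow_ne_zero
      have hmeasB : gauss n (B j) ≤ t * (2:ℝ≥0∞) ^ ((j:ℝ)+1) :=
        le_trans (measure_mono hsub) (setE_bounds hn f x hR le_rfl hs0).1
      have hstep3 : ∫⁻ y in B j, ‖f y‖₊ ∂gauss n ≤ N * (t * (2:ℝ≥0∞) ^ ((j:ℝ)+1)) ^ ((1:ℝ)/q) := by
        refine le_trans (holder_bound hpq f hf (B j)) ?_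
        exact mul_le_mul_right (ENNReal.rpow_le_rpow hmeasB hpq.symm.one_div_nonneg) N
      calc ∫⁻ y in B j, h y ∂gauss n
          ≤ c * (N * (t * (2:ℝ≥0∞) ^ ((j:ℝ)+1)) ^ ((1:ℝ)/q)) := by
            refine le_trans hstep1 ?_
            rw [hstep2]
            exact mul_le_mul_right hstep3 c
        _ = N * t ^ (β - 1 + 1/q) *
              ((2:ℝ≥0∞) ^ ((1:ℝ)/q) * (2:ℝ≥0∞) ^ ((j:ℝ) * (β - 1 + 1/q))) :=
            term_high_eq ht0 httop j N
        _ = N * t ^ (β - 1/p) * (2:ℝ≥0∞) ^ ((1:ℝ)/q) * (2:ℝ≥0∞) ^ ((j:ℝ) * (β - 1/p)) := by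
            have : β - 1 + 1/q = β - 1/p := by rw [hexp1]; ring
            rw [this]; ring
    calc (∑' j, ∫⁻ y in B j, h y ∂gauss n)
        ≤ ∑' j : ℕ, N * t ^ (β - 1/p) * (2:ℝ≥0∞) ^ ((1:ℝ)/q) * (2:ℝ≥0∞) ^ ((j:ℝ) * (β - 1/p)) :=
          ENNReal.tsum_le_tsum hterm
      _ = (N * t ^ (β - 1/p) * (2:ℝ≥0∞) ^ ((1:ℝ)/q)) * ∑' j : ℕ, (2:ℝ≥0∞) ^ ((j:ℝ) * (β - 1/p)) :=
          ENNReal.tsum_mul_left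
      _ = (N * t ^ (β - 1/p) * (2:ℝ≥0∞) ^ ((1:ℝ)/q)) * (1 - (2:ℝ≥0∞) ^ (β - 1/p))⁻¹ := by
          rw [(geo_sum (by linarith : β - 1/p < 0)).1]
      _ = ((2:ℝ≥0∞) ^ ((1:ℝ)/q) * (1 - (2:ℝ≥0∞) ^ (β - 1/p))⁻¹) * (N * t ^ (β - 1/p)) := by ring
  exact le_trans hsplit (add_le_add hlow hhigh)

lemma div_rpow' {N M : ℝ≥0∞} (hNt : N ≠ ∞) (hM0 : M ≠ 0) (hMt : M ≠ ∞) (c : ℝ) :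
    (N / M) ^ c = N ^ c * M ^ (-c) := by
  rw [div_eq_mul_inv, ENNReal.mul_rpow_of_ne_top hNt (by simp [hM0]), ENNReal.inv_rpow,
    ← ENNReal.rpow_neg]

theorem stmt10 (n : ℕ) (a β p : ℝ) (ha : 0 < a) (hβ : β ∈ Set.Ioo (0 : ℝ) 1)
    (hp : 1 < p) (hpβ : p < 1 / β) :
    ∃ C : ℝ, 0 < C ∧
      ∀ f : EuclideanSpace ℝ (Fin n) → ℝ, MemLp f (ENNReal.ofReal p) (gauss n) →
        ∀ x, fracInt n a β f x ≤
          ENNReal.ofReal C * eLpNorm f (ENNReal.ofReal p) (gauss n) ^ (β * p) *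
            maxloc n a f x ^ (1 - β * p) := by
  obtain ⟨hβ0, hβ1⟩ := hβ
  have hp0 : 0 < p := lt_trans one_pos hp
  have hpq : p.HolderConjugate (Real.conjExponent p) := Real.HolderConjugate.conjExponent hp
  set q := Real.conjExponent p with hq
  have hβp : β < 1 / p := by
    rw [lt_div_iff₀ hβ0] at hpβ
    rw [lt_div_iff₀ hp0]
    linarith [mul_comm p β]
  have hβp1 : β * p < 1 := by
    rw [lt_div_iff₀ hp0] at hβp
    linarith
  set K₁ : ℝ≥0∞ := (2:ℝ≥0∞) ^ ((1:ℝ)-β) * (1 - (2:ℝ≥0∞) ^ (-β))⁻¹ with hK₁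
  set K₂ : ℝ≥0∞ := (2:ℝ≥0∞) ^ ((1:ℝ)/q) * (1 - (2:ℝ≥0∞) ^ (β - 1/p))⁻¹ with hK₂
  set K : ℝ≥0∞ := K₁ + K₂ with hK
  have hK₁top : K₁ ≠ ∞ :=
    ENNReal.mul_ne_top two_rpow_ne_top (geo_sum (by linarith : -β < 0)).2
  have hK₂top : K₂ ≠ ∞ :=
    ENNReal.mul_ne_top two_rpow_ne_top (geo_sum (by linarith : β - 1/p < 0)).2
  have hKtop : K ≠ ∞ := ENNReal.add_ne_top.mpr ⟨hK₁top, hK₂top⟩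
  have hK0 : K ≠ 0 := by
    intro hc
    rw [hK, add_eq_zero] at hc
    have : K₁ ≠ 0 := by
      apply mul_ne_zero two_rpow_ne_zero
      simp only [ne_eq, ENNReal.inv_eq_zero]
      exact ENNReal.sub_ne_top (by simp)
    exact this hc.1
  refine ⟨K.toReal + 1, by positivity, ?_⟩
  intro f hf x
  set M := maxloc n a f x with hM
  set N := eLpNorm f (ENNReal.ofReal p) (gauss n) with hN
  have hfm : AEMeasurable (fun y => (‖f y‖₊ : ℝ≥0∞)) (gauss n) :=
    hf.aestronglyMeasurable.enorm
  have hNtop : N ≠ ∞ := hf.2.ne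
  have hofK : K ≤ ENNReal.ofReal (K.toReal + 1) := by
    conv_lhs => rw [← ENNReal.ofReal_toReal hKtop]
    exact ENNReal.ofReal_le_ofReal (by linarith)
  suffices h : fracInt n a β f x ≤ K * N ^ (β * p) * M ^ (1 - β * p) by
    refine le_trans h ?_
    exact mul_le_mul_left (mul_le_mul_left hofK _) _
  rcases le_or_gt (a * mfun x) 0 with hR | hR
  · have hempty : ball x (a * mfun x) = (∅ : Set (EuclideanSpace ℝ (Fin n))) :=
      ball_eq_empty.mpr hR
    have : fracInt n a β f x = 0 := by
      rw [fracInt, hempty]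
      simp
    rw [this]
    exact zero_le
  have hn : n ≠ 0 := by
    intro hc
    subst hc
    have hx0 : ‖x‖ = 0 := by
      have : x = 0 := Subsingleton.elim x 0
      rw [this, norm_zero]
    rw [mfun, hx0] at hR
    simp at hR
  -- now main cases
  rcases eq_or_ne N 0 with hN0 | hN0
  · -- f = 0 a.e.
    have hfz : f =ᵐ[gauss n] 0 :=
      (eLpNorm_eq_zero_iff hf.aestronglyMeasurable (by simp [hp0])).mp hN0
    have : fracInt n a β f x = 0 := by
      rw [fracInt]
      rw [← lintegral_zero (μ := (gauss n).restrict (ball x (a * mfun x)))]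
      apply lintegral_congr_ae
      filter_upwards [ae_restrict_of_ae hfz] with y hy
      rw [hy]
      simp
    rw [this]
    exact zero_le
  rcases eq_or_ne M 0 with hM0 | hM0
  · -- integral of |f| over the ball is 0
    have hball := le_maxloc hn f x x hR le_rfl (mem_ball_self hR)
    rw [← hM, hM0, zero_mul] at hball
    have hz : ∫⁻ y in ball x (a * mfun x), ‖f y‖₊ ∂gauss n = 0 := le_antisymm hball zero_le
    have hae := (lintegral_eq_zero_iff' (hfm.restrict)).mp hz
    have : fracInt n a β f x = 0 := by
      rw [fracInt]
      rw [← lintegral_zero (μ := (gauss n).restrict (ball x (a * mfun x)))]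
      apply lintegral_congr_ae
      filter_upwards [hae] with y hy
      simp only [Pi.zero_apply] at hy
      rw [hy]
      simp
    rw [this]
    exact zero_le
  rcases eq_or_ne M ∞ with hMtop | hMtop
  · -- RHS is ∞
    have h1 : M ^ (1 - β * p) = ∞ := by
      rw [hMtop]
      exact ENNReal.top_rpow_of_pos (by linarith)
    have h2 : K * N ^ (β * p) ≠ 0 := by
      apply mul_ne_zero hK0
      simp only [ne_eq, ENNReal.rpow_eq_zero_iff, not_or, not_and, not_lt]
      exact ⟨fun hc => absurd hc hN0, fun hc => absurd hc hNtop⟩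
    rw [h1, ENNReal.mul_top h2]
    exact le_top
  -- main case
  set t : ℝ≥0∞ := (N / M) ^ p with ht
  have hNM0 : N / M ≠ 0 := by
    simp only [ne_eq, ENNReal.div_eq_zero_iff, not_or]
    exact ⟨hN0, hMtop⟩
  have hNMtop : N / M ≠ ∞ := (ENNReal.div_lt_top hNtop hM0).ne
  have ht0 : t ≠ 0 := by
    simp only [ht, ne_eq, ENNReal.rpow_eq_zero_iff, not_or, not_and, not_lt]
    exact ⟨fun hc => absurd hc hNM0, fun hc => absurd hc hNMtop⟩
  have httop : t ≠ ∞ := rpow_ne_top' hNM0 hNMtop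
  have hkey := key_bound hn hβ0 hβ1 hpq hβp f hfm x hR ht0 httop
  refine le_trans hkey ?_
  have heq1 : M * t ^ β = N ^ (β * p) * M ^ (1 - β * p) := by
    rw [ht, ← ENNReal.rpow_mul, div_rpow' hNtop hM0 hMtop]
    have hpβ' : p * β = β * p := mul_comm p β
    rw [hpβ']
    calc M * (N ^ (β * p) * M ^ (-(β * p)))
        = N ^ (β * p) * (M ^ (1:ℝ) * M ^ (-(β * p))) := by rw [ENNReal.rpow_one]; ring
      _ = N ^ (β * p) * M ^ (1 + -(β * p)) := by
          rw [← ENNReal.rpow_add _ _ hM0 hMtop]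
      _ = N ^ (β * p) * M ^ (1 - β * p) := by rw [← sub_eq_add_neg]
  have heq2 : N * t ^ (β - 1/p) = N ^ (β * p) * M ^ (1 - β * p) := by
    rw [ht, ← ENNReal.rpow_mul, div_rpow' hNtop hM0 hMtop]
    have hexp : p * (β - 1/p) = β * p - 1 := by field_simp
    rw [hexp]
    calc N * (N ^ (β * p - 1) * M ^ (-(β * p - 1)))
        = N ^ (1:ℝ) * N ^ (β * p - 1) * M ^ (1 - β * p) := by
          rw [ENNReal.rpow_one]
          have : -(β * p - 1) = 1 - β * p := by ring
          rw [this]; ring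
      _ = N ^ (1 + (β * p - 1)) * M ^ (1 - β * p) := by
          rw [← ENNReal.rpow_add _ _ hN0 hNtop]
      _ = N ^ (β * p) * M ^ (1 - β * p) := by
          congr 2
          ring
  rw [heq1, heq2, ← add_mul, ← hK]
  rw [mul_assoc]
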